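/- arXiv:1901.06407 — 5 statements merged into one kernel-verified Lean document; each statement's English description precedes it below -/
import Mathlib

section
/- In the model M_k, a state x satisfies the formula A_m = ⟨b⟩^m [b]⊥ ∧ ¬⟨b⟩^{m+1} [b]⊥ ∧ ⟨b⟩(⟨b⟩⊤ ∧ [b]⟨b⟩⊤) if and only if k = m and x is the root r_k. -/
/-- Formulas of basic modal logic: propositional variables, ⊥, →, and [b]. -/
inductive MF : Type where
  | var : ℕ → MF
  | bot : MF
  | imp : MF → MF → MF
  | box : MF → MF

def MF.neg (φ : MF) : MF := .imp φ .bot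
def MF.top : MF := .imp .bot .bot
def MF.and (φ ψ : MF) : MF := .neg (.imp φ (.neg ψ))
def MF.dia (φ : MF) : MF := .neg (.box (.neg φ))

/-- ⟨b⟩^k φ -/
def MF.diaN : ℕ → MF → MF
  | 0, φ => φ
  | k + 1, φ => .dia (MF.diaN k φ)

/-- Standard Kripke satisfaction over a model (S, R, V). -/
def sat {S : Type} (R : S → S → Prop) (V : ℕ → S → Prop) : S → MF → Prop
  | s, .var p => V p s
  | _, .bot => False
  | s, .imp φ ψ => sat R V s φ → sat R V s ψ
  | s, .box φ => ∀ t, R s t → sat R V t φ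
/-- States of the model M_m: root r, reflexive state t, and s_1, ..., s_m
(here `St.s i` for `i : Fin m` represents the paper's s_{i+1}). -/
inductive St (m : ℕ) : Type where
  | r : St m
  | t : St m
  | s : Fin m → St m

/-- The base relation {(r,t), (t,t), (r,s_1)} ∪ {(s_i, s_{i+1}) : 1 ≤ i ≤ m-1}. -/
def baseRel (m : ℕ) : St m → St m → Prop := fun x y =>
  (x = .r ∧ y = .t) ∨ (x = .t ∧ y = .t) ∨
  (∃ h : 0 < m, x = .r ∧ y = .s ⟨0, h⟩) ∨
  (∃ i j : Fin m, x = .s i ∧ y = .s j ∧ (j : ℕ) = (i : ℕ) + 1)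

/-- R_b: the transitive closure of the base relation. -/
def Rb (m : ℕ) : St m → St m → Prop := Relation.TransGen (baseRel m)

/-- The valuation of M_m: all propositional variables are false everywhere. -/
def Vempty (m : ℕ) : ℕ → St m → Prop := fun _ _ => False

/-- A_m = ⟨b⟩^m [b]⊥ ∧ ¬⟨b⟩^{m+1} [b]⊥ ∧ ⟨b⟩(⟨b⟩⊤ ∧ [b]⟨b⟩⊤). -/
def Aform (m : ℕ) : MF :=
  .and (MF.diaN m (.box .bot))
    (.and (.neg (MF.diaN (m + 1) (.box .bot)))
      (.dia (.and (.dia .top) (.box (.dia .top)))))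

/-- B_m = ⟨b⟩A_m. -/
def Bform (m : ℕ) : MF := .dia (Aform m)

section Aux

lemma sat_and' {S : Type} {R : S → S → Prop} {V : ℕ → S → Prop} {s : S} {φ ψ : MF} :
    sat R V s (.and φ ψ) ↔ sat R V s φ ∧ sat R V s ψ := by
  unfold MF.and MF.neg
  simp only [sat]
  tauto

lemma sat_dia' {S : Type} {R : S → S → Prop} {V : ℕ → S → Prop} {s : S} {φ : MF} :
    sat R V s (.dia φ) ↔ ∃ t, R s t ∧ sat R V t φ := by
  unfold MF.dia MF.neg
  simp only [sat]
  constructor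
  · intro h
    by_contra hc
    push_neg at hc
    exact h fun t ht hs => hc t ht hs
  · rintro ⟨t, ht, hs⟩ h
    exact h t ht hs

lemma sat_top' {S : Type} {R : S → S → Prop} {V : ℕ → S → Prop} {s : S} :
    sat R V s MF.top := fun h => h

lemma sat_neg' {S : Type} {R : S → S → Prop} {V : ℕ → S → Prop} {s : S} {φ : MF} :
    sat R V s (.neg φ) ↔ ¬ sat R V s φ := by
  unfold MF.neg
  constructor
  · exact fun h hs => h hs
  · exact fun h hs => h hs

variable {k : ℕ}

def RbUp (x y : St k) : Prop :=
  (y = .t ∧ (x = .r ∨ x = .t)) ∨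
  (∃ i j : Fin k, x = .s i ∧ y = .s j ∧ (i : ℕ) < (j : ℕ)) ∨
  (∃ j : Fin k, x = .r ∧ y = .s j)

lemma rb_s_s_aux (d : ℕ) : ∀ i j : Fin k, (j : ℕ) = (i : ℕ) + d + 1 → Rb k (.s i) (.s j) := by
  induction d with
  | zero =>
    intro i j h
    exact Relation.TransGen.single (Or.inr (Or.inr (Or.inr ⟨i, j, rfl, rfl, by omega⟩)))
  | succ n ih =>
    intro i j h
    have hi1 : (i : ℕ) + 1 < k := by have := j.isLt; omega
    have h1 : Rb k (.s i) (.s ⟨(i : ℕ) + 1, hi1⟩) :=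
      Relation.TransGen.single (Or.inr (Or.inr (Or.inr ⟨i, ⟨(i:ℕ)+1, hi1⟩, rfl, rfl, rfl⟩)))
    exact h1.trans (ih ⟨(i:ℕ)+1, hi1⟩ j (by simp; omega))

lemma rb_s_s (i j : Fin k) (h : (i : ℕ) < (j : ℕ)) : Rb k (.s i) (.s j) :=
  rb_s_s_aux ((j : ℕ) - (i : ℕ) - 1) i j (by omega)

lemma rb_r_t : Rb k .r .t := Relation.TransGen.single (Or.inl ⟨rfl, rfl⟩)

lemma rb_t_t : Rb k .t .t := Relation.TransGen.single (Or.inr (Or.inl ⟨rfl, rfl⟩))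

lemma rb_r_s (j : Fin k) : Rb k .r (.s j) := by
  have h0 : 0 < k := j.pos
  have h1 : Rb k .r (.s ⟨0, h0⟩) :=
    Relation.TransGen.single (Or.inr (Or.inr (Or.inl ⟨h0, rfl, rfl⟩)))
  rcases Nat.eq_zero_or_pos (j : ℕ) with hj | hj
  · have : (⟨0, h0⟩ : Fin k) = j := Fin.ext (by simp [hj])
    rwa [this] at h1
  · exact h1.trans (rb_s_s _ _ (by simpa using hj))

lemma rbup_of_base {x y : St k} (h : baseRel k x y) : RbUp x y := by
  rcases h with ⟨rfl, rfl⟩ | ⟨rfl, rfl⟩ | ⟨h0, rfl, rfl⟩ | ⟨i, j, rfl, rfl, hij⟩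
  · exact Or.inl ⟨rfl, Or.inl rfl⟩
  · exact Or.inl ⟨rfl, Or.inr rfl⟩
  · exact Or.inr (Or.inr ⟨_, rfl, rfl⟩)
  · exact Or.inr (Or.inl ⟨i, j, rfl, rfl, by omega⟩)

lemma rbup_no_r {x : St k} (h : RbUp x .r) : False := by
  simp [RbUp] at h

lemma rbup_tail {x b y : St k} (h : RbUp x b) (hb : baseRel k b y) : RbUp x y := by
  rcases hb with ⟨rfl, rfl⟩ | ⟨rfl, rfl⟩ | ⟨h0, rfl, rfl⟩ | ⟨i, j, rfl, rfl, hij⟩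
  · exact absurd h rbup_no_r
  · rcases h with ⟨_, hx⟩ | ⟨i, j, _, hj, _⟩ | ⟨j, _, hj⟩
    · exact Or.inl ⟨rfl, hx⟩
    · exact absurd hj (by simp)
    · exact absurd hj (by simp)
  · exact absurd h rbup_no_r
  · rcases h with ⟨ht, _⟩ | ⟨i', j', hx, hj, hlt⟩ | ⟨j', hx, hj⟩
    · exact absurd ht (by simp)
    · rw [St.s.injEq] at hj
      subst hx
      exact Or.inr (Or.inl ⟨i', j, rfl, rfl, by omega⟩)
    · rw [St.s.injEq] at hj
      subst hx
      exact Or.inr (Or.inr ⟨j, rfl, rfl⟩)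

lemma rb_iff {x y : St k} : Rb k x y ↔ RbUp x y := by
  constructor
  · intro h
    induction h with
    | single h => exact rbup_of_base h
    | tail _ hb ih => exact rbup_tail ih hb
  · intro h
    rcases h with ⟨rfl, rfl | rfl⟩ | ⟨i, j, rfl, rfl, hij⟩ | ⟨j, rfl, rfl⟩
    · exact rb_r_t
    · exact rb_t_t
    · exact rb_s_s i j hij
    · exact rb_r_s j

lemma rb_t_iff {y : St k} : Rb k .t y ↔ y = .t := by
  rw [rb_iff]
  constructor
  · rintro (⟨rfl, _⟩ | ⟨i, j, hx, _, _⟩ | ⟨j, hx, _⟩)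
    · rfl
    · exact absurd hx (by simp)
    · exact absurd hx (by simp)
  · rintro rfl
    exact Or.inl ⟨rfl, Or.inr rfl⟩

lemma rb_r_cases {y : St k} (h : Rb k .r y) : y = .t ∨ ∃ j, y = .s j := by
  rw [rb_iff] at h
  rcases h with ⟨rfl, _⟩ | ⟨i, j, hx, rfl, _⟩ | ⟨j, _, rfl⟩
  · exact Or.inl rfl
  · exact Or.inr ⟨j, rfl⟩
  · exact Or.inr ⟨j, rfl⟩

lemma rb_s_cases {i : Fin k} {y : St k} (h : Rb k (.s i) y) :
    ∃ j, y = .s j ∧ (i : ℕ) < (j : ℕ) := by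
  rw [rb_iff] at h
  rcases h with ⟨rfl, hx | hx⟩ | ⟨i', j, hx, rfl, hlt⟩ | ⟨j, hx, _⟩
  · exact absurd hx (by simp)
  · exact absurd hx (by simp)
  · rw [St.s.injEq] at hx
    exact ⟨j, rfl, by omega⟩
  · exact absurd hx (by simp)

lemma boxbot_s_iff (i : Fin k) :
    sat (Rb k) (Vempty k) (.s i) (.box .bot) ↔ (i : ℕ) + 1 = k := by
  simp only [sat]
  constructor
  · intro h
    by_contra hc
    have hi : (i : ℕ) + 1 < k := by have := i.isLt; omega
    exact h (.s ⟨(i:ℕ)+1, hi⟩) (rb_s_s i ⟨(i:ℕ)+1, hi⟩ (by simp))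
  · intro h y hy
    rcases rb_s_cases hy with ⟨j, rfl, hj⟩
    have := j.isLt
    omega

lemma not_boxbot_t : ¬ sat (Rb k) (Vempty k) .t (.box .bot) := by
  intro h
  exact h .t rb_t_t

lemma not_boxbot_r : ¬ sat (Rb k) (Vempty k) .r (.box .bot) := by
  intro h
  exact h .t rb_r_t

lemma diaN_t (j : ℕ) : ¬ sat (Rb k) (Vempty k) .t (MF.diaN j (.box .bot)) := by
  induction j with
  | zero => exact not_boxbot_t
  | succ n ih =>
    intro h
    simp only [MF.diaN] at h
    rw [sat_dia'] at h
    obtain ⟨y, hy, hs⟩ := h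
    obtain rfl := rb_t_iff.mp hy
    exact ih hs

lemma diaN_s (j : ℕ) : ∀ i : Fin k,
    sat (Rb k) (Vempty k) (.s i) (MF.diaN j (.box .bot)) ↔
      ((i : ℕ) + j < k ∧ (j = 0 → (i : ℕ) + 1 = k)) := by
  induction j with
  | zero =>
    intro i
    simp only [MF.diaN]
    rw [boxbot_s_iff]
    have := i.isLt
    simp only [true_implies]
    omega
  | succ n ih =>
    intro i
    simp only [MF.diaN]
    rw [sat_dia']
    constructor
    · rintro ⟨y, hy, hs⟩
      rcases rb_s_cases hy with ⟨j', rfl, hj'⟩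
      rw [ih] at hs
      obtain ⟨h1, h2⟩ := hs
      refine ⟨by omega, by omega⟩
    · rintro ⟨h1, -⟩
      rcases Nat.eq_zero_or_pos n with rfl | hn
      · have hi : (i : ℕ) + 1 < k := by omega
        refine ⟨.s ⟨k-1, by omega⟩, rb_s_s _ _ ?_, ?_⟩
        · simp only [Fin.val_mk]
          omega
        · rw [ih]
          simp only [Fin.val_mk]
          omega
      · have hi : (i : ℕ) + 1 < k := by omega
        refine ⟨.s ⟨(i:ℕ)+1, hi⟩, rb_s_s _ _ (by simp), ?_⟩
        rw [ih]
        simp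
        omega

lemma diaN_r (j : ℕ) :
    sat (Rb k) (Vempty k) .r (MF.diaN j (.box .bot)) ↔ (1 ≤ j ∧ j ≤ k) := by
  cases j with
  | zero =>
    simp only [MF.diaN]
    constructor
    · intro h
      exact (h .t rb_r_t).elim
    · rintro ⟨h, -⟩
      omega
  | succ n =>
    simp only [MF.diaN]
    rw [sat_dia']
    constructor
    · rintro ⟨y, hy, hs⟩
      rcases rb_r_cases hy with rfl | ⟨i, rfl⟩
      · exact absurd hs (diaN_t n)
      · rw [diaN_s] at hs
        obtain ⟨h1, -⟩ := hs
        omega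
    · rintro ⟨-, h2⟩
      rcases Nat.eq_zero_or_pos n with rfl | hn
      · refine ⟨.s ⟨k-1, by omega⟩, rb_r_s _, ?_⟩
        rw [diaN_s]
        simp only [Fin.val_mk]
        omega
      · refine ⟨.s ⟨0, by omega⟩, rb_r_s _, ?_⟩
        rw [diaN_s]
        simp only [Fin.val_mk]
        omega

lemma sat_C_t : sat (Rb k) (Vempty k) .t (MF.and (.dia .top) (.box (.dia .top))) := by
  rw [sat_and']
  constructor
  · rw [sat_dia']
    exact ⟨.t, rb_t_t, sat_top'⟩
  · intro y hy
    obtain rfl := rb_t_iff.mp hy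
    rw [sat_dia']
    exact ⟨.t, rb_t_t, sat_top'⟩

lemma third_r : sat (Rb k) (Vempty k) .r (MF.dia (MF.and (.dia .top) (.box (.dia .top)))) := by
  rw [sat_dia']
  exact ⟨.t, rb_r_t, sat_C_t⟩

lemma third_s (i : Fin k) :
    ¬ sat (Rb k) (Vempty k) (.s i) (MF.dia (MF.and (.dia .top) (.box (.dia .top)))) := by
  rw [sat_dia']
  rintro ⟨y, hy, hs⟩
  rcases rb_s_cases hy with ⟨j, rfl, hj⟩
  rw [sat_and'] at hs
  obtain ⟨h1, h2⟩ := hs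
  rw [sat_dia'] at h1
  obtain ⟨z, hz, -⟩ := h1
  rcases rb_s_cases hz with ⟨j2, rfl, hj2⟩
  have hk1 : k - 1 < k := by have := j2.isLt; omega
  have hlast : Rb k (.s j) (.s ⟨k-1, hk1⟩) :=
    rb_s_s _ _ (by simp only [Fin.val_mk]; have := j2.isLt; omega)
  have h3 := h2 _ hlast
  rw [sat_dia'] at h3
  obtain ⟨w, hw, -⟩ := h3
  rcases rb_s_cases hw with ⟨j3, rfl, hj3⟩
  have := j3.isLt
  simp at hj3
  omega

end Aux

/-- In the model M_k, a state x satisfies A_m iff k = m and x is the root r_k. -/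
theorem stmt2 (k m : ℕ) (hk : 1 ≤ k) (hm : 1 ≤ m) (x : St k) :
    sat (Rb k) (Vempty k) x (Aform m) ↔ k = m ∧ x = St.r := by
  unfold Aform
  rw [sat_and', sat_and', sat_neg']
  cases x with
  | r =>
    rw [diaN_r, diaN_r]
    constructor
    · rintro ⟨⟨h1, h2⟩, h3, -⟩
      refine ⟨?_, rfl⟩
      have h4 : ¬ (m + 1 ≤ k) := fun h => h3 ⟨by omega, h⟩
      omega
    · rintro ⟨rfl, -⟩
      exact ⟨⟨hm, le_refl _⟩, fun hc => by omega, third_r⟩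
  | t =>
    constructor
    · rintro ⟨h, -⟩
      exact absurd h (diaN_t m)
    · rintro ⟨-, h⟩
      exact absurd h (by simp)
  | s i =>
    constructor
    · rintro ⟨-, -, h3⟩
      exact absurd h3 (third_s i)
    · rintro ⟨-, h⟩
      exact absurd h (by simp)
end

section
/- In the model M_m, the root r_m satisfies ⟨b⟩(⟨b⟩⊤ ∧ [b]⟨b⟩⊤) (witnessed by the reflexive state t^m), while no state s_i^m or t^m satisfies the full conjunction A_m. -/
section Helpers

lemma Rb_tt (m : ℕ) : Rb m St.t St.t :=
  Relation.TransGen.single (Or.inr (Or.inl ⟨rfl, rfl⟩))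

lemma Rb_rt (m : ℕ) : Rb m St.r St.t :=
  Relation.TransGen.single (Or.inl ⟨rfl, rfl⟩)

lemma t_succ {m : ℕ} {y : St m} (h : Rb m St.t y) : y = St.t := by
  induction h with
  | single h =>
    rcases h with ⟨hx, hy⟩ | ⟨hx, hy⟩ | ⟨_, hx, hy⟩ | ⟨a, b, hx, hy, _⟩ <;> simp_all
  | tail _ h ih =>
    subst ih
    rcases h with ⟨hx, hy⟩ | ⟨hx, hy⟩ | ⟨_, hx, hy⟩ | ⟨a, b, hx, hy, _⟩ <;> simp_all

lemma base_s {m : ℕ} {i : Fin m} {y : St m} (h : baseRel m (St.s i) y) :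
    ∃ j : Fin m, y = St.s j ∧ (j : ℕ) = (i : ℕ) + 1 := by
  rcases h with ⟨hx, hy⟩ | ⟨hx, hy⟩ | ⟨_, hx, hy⟩ | ⟨a, b, hx, hy, hab⟩
  · exact absurd hx (by simp)
  · exact absurd hx (by simp)
  · exact absurd hx (by simp)
  · obtain rfl : i = a := by simpa using hx
    exact ⟨b, hy, hab⟩

lemma s_succ {m : ℕ} {i : Fin m} {y : St m} (h : Rb m (St.s i) y) :
    ∃ j : Fin m, y = St.s j ∧ (i : ℕ) < (j : ℕ) := by
  induction h with
  | single h =>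
    obtain ⟨j, hy, hj⟩ := base_s h
    exact ⟨j, hy, by omega⟩
  | tail _ h ih =>
    obtain ⟨j, rfl, hj⟩ := ih
    obtain ⟨k, hy, hk⟩ := base_s h
    exact ⟨k, hy, by omega⟩

lemma chain {m : ℕ} (k : ℕ) : ∀ (j l : Fin m), (l : ℕ) = (j : ℕ) + k + 1 →
    Rb m (St.s j) (St.s l) := by
  induction k with
  | zero =>
    intro j l hl
    exact Relation.TransGen.single (Or.inr (Or.inr (Or.inr ⟨j, l, rfl, rfl, hl⟩)))
  | succ k ih =>
    intro j l hl
    have hmid : (j : ℕ) + k + 1 < m := by have := l.isLt; omega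
    refine Relation.TransGen.tail (ih j ⟨(j : ℕ) + k + 1, hmid⟩ rfl) ?_
    exact Or.inr (Or.inr (Or.inr ⟨_, l, rfl, rfl, by simp; omega⟩))

lemma no_diaT_last {m : ℕ} {j : Fin m} (hj : (j : ℕ) + 1 = m) :
    ¬ sat (Rb m) (Vempty m) (St.s j) (MF.dia .top) := by
  intro h
  exact h (fun y hy _ => by
    obtain ⟨k, _, hk⟩ := s_succ hy
    have := k.isLt; omega)

lemma not_sat_and_dia {m : ℕ} (j : Fin m) :
    ¬ sat (Rb m) (Vempty m) (St.s j) (MF.and (.dia .top) (.box (.dia .top))) := by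
  intro h
  apply h
  intro hd hb
  by_cases hjm : (j : ℕ) + 1 = m
  · exact no_diaT_last hjm hd
  · have hlt : (j : ℕ) + 1 < m := by have := j.isLt; omega
    have hlast : ((⟨m - 1, by omega⟩ : Fin m) : ℕ) = (j : ℕ) + (m - 2 - j) + 1 := by
      simp; omega
    exact no_diaT_last (j := ⟨m - 1, by omega⟩) (by simp; omega)
      (hb _ (chain (m - 2 - j) j _ hlast))

lemma t_no_diaN {m : ℕ} (k : ℕ) :
    ¬ sat (Rb m) (Vempty m) St.t (MF.diaN k (.box .bot)) := by
  induction k with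
  | zero => intro h; exact h St.t (Rb_tt m)
  | succ k ih =>
    intro h
    exact h (fun y hy hs => ih ((t_succ hy) ▸ hs))

end Helpers

/-- In M_m, the root satisfies ⟨b⟩(⟨b⟩⊤ ∧ [b]⟨b⟩⊤), witnessed by the
reflexive state t^m, while neither t^m nor any s_i^m satisfies A_m. -/


theorem stmt3 (m : ℕ) (hm : 1 ≤ m) :
    (Rb m St.r St.t ∧
      sat (Rb m) (Vempty m) St.t (MF.and (.dia .top) (.box (.dia .top))) ∧
      sat (Rb m) (Vempty m) St.r (MF.dia (MF.and (.dia .top) (.box (.dia .top)))))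
    ∧ ¬ sat (Rb m) (Vempty m) St.t (Aform m)
    ∧ ∀ i : Fin m, ¬ sat (Rb m) (Vempty m) (St.s i) (Aform m) := by
  refine ⟨⟨Rb_rt m, ?_, ?_⟩, ?_, ?_⟩
  · intro h
    apply h
    · intro h2; exact h2 St.t (Rb_tt m) id
    · intro y hy h2
      cases t_succ hy
      exact h2 St.t (Rb_tt m) id
  · intro h
    apply h St.t (Rb_rt m)
    intro h2
    apply h2
    · intro h3; exact h3 St.t (Rb_tt m) id
    · intro y hy h3
      cases t_succ hy
      exact h3 St.t (Rb_tt m) id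
  · intro h
    exact h (fun hX _ => t_no_diaN m hX)
  · intro i h
    apply h
    intro _ hY
    apply hY
    intro _ hW
    exact hW (fun y hy hC => by
      obtain ⟨j, rfl, _⟩ := s_succ hy
      exact not_sat_and_dia j hC)
end

section
/- Relativization lemma: let M = (S, R, V) be a Kripke model, p a propositional variable, and let M' be the submodel of M generated from a state s_0 ⊨ p by the rule: s_0 ∈ S', and if x ∈ S', x R y, and M, y ⊨ p, then y ∈ S' (with the relation restricted to S'). Define the translation φ' by: q' = q for variables, ⊥' = ⊥, (φ→ψ)' = φ'→ψ', and ([b]φ)' = [b](p → φ'). Then for every formula φ not containing p and every state s ∈ S': M, s ⊨ φ' if and only if M', s ⊨ φ. -/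
/-- The relativized translation: ([b]φ)' = [b](p → φ'). -/
def relT (p : ℕ) : MF → MF
  | .var q => .var q
  | .bot => .bot
  | .imp a b => .imp (relT p a) (relT p b)
  | .box a => .box (.imp (.var p) (relT p a))

/-- The variable q occurs in a formula. -/
def occurs (q : ℕ) : MF → Prop
  | .var r => r = q
  | .bot => False
  | .imp a b => occurs q a ∨ occurs q b
  | .box a => occurs q a

/-- The smallest subset of S containing s0 and closed under:
x ∈ S', x R y, y ⊨ p implies y ∈ S'. -/
inductive Gen {S : Type} (R : S → S → Prop) (V : ℕ → S → Prop) (p : ℕ) (s0 : S) : S → Prop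
  | base : Gen R V p s0 s0
  | step {x y : S} : Gen R V p s0 x → R x y → V p y → Gen R V p s0 y

lemma Gen_V {S : Type} {R : S → S → Prop} {V : ℕ → S → Prop} {p : ℕ} {s0 : S}
    (hs0 : V p s0) {x : S} (h : Gen R V p s0 x) : V p x := by
  induction h with
  | base => exact hs0
  | step _ _ hp => exact hp

/-- Relativization lemma: for every formula φ not containing p and every
state s of the generated submodel M', M, s ⊨ φ' iff M', s ⊨ φ. -/
theorem stmt8 {S : Type} (R : S → S → Prop) (V : ℕ → S → Prop) (p : ℕ)
    (s0 : S) (hs0 : V p s0) (φ : MF) (hφ : ¬ occurs p φ)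
    (s : {x // Gen R V p s0 x}) :
    sat R V s.1 (relT p φ) ↔
      sat (fun a b : {x // Gen R V p s0 x} => R a.1 b.1) (fun q a => V q a.1) s φ := by
  induction φ generalizing s with
  | var q => simp [sat, relT]
  | bot => simp [sat, relT]
  | imp a b iha ihb =>
      simp only [occurs, not_or] at hφ
      simp only [sat, relT]
      rw [iha hφ.1, ihb hφ.2]
  | box a ih =>
      simp only [occurs] at hφ
      simp only [sat, relT]
      constructor
      · intro h t ht
        exact (ih hφ t).mp (h t.1 ht (Gen_V hs0 t.2))
      · intro h t ht hp
        have hg : Gen R V p s0 t := .step s.2 ht hp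
        exact (ih hφ ⟨t, hg⟩).mpr (h ⟨t, hg⟩ ht)
end

section
/- Let φ be a basic modal formula whose variables are among p_1, ..., p_n, let p = p_{n+1} be fresh, let φ' be the relativized translation ([b]ψ becomes [b](p → ψ')), and let Θ = p ∧ [b*](⟨b⟩p → p), where [b*]χ means χ holds at all states reachable from the current state by the reflexive-transitive closure of R_b. Then φ is satisfiable if and only if Θ ∧ φ' is satisfiable. -/
/-- Modal formulas with the iteration modality [b*]. -/
inductive MFs : Type where
  | var : ℕ → MFs
  | bot : MFs
  | imp : MFs → MFs → MFs
  | box : MFs → MFs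
  | boxS : MFs → MFs

def MFs.neg (φ : MFs) : MFs := .imp φ .bot
def MFs.top : MFs := .imp .bot .bot
def MFs.and (φ ψ : MFs) : MFs := .neg (.imp φ (.neg ψ))
def MFs.dia (φ : MFs) : MFs := .neg (.box (.neg φ))

/-- Satisfaction with [b*] interpreted via the reflexive-transitive closure. -/
def sats {S : Type} (R : S → S → Prop) (V : ℕ → S → Prop) : S → MFs → Prop
  | s, .var p => V p s
  | _, .bot => False
  | s, .imp φ ψ => sats R V s φ → sats R V s ψ
  | s, .box φ => ∀ t, R s t → sats R V t φ
  | s, .boxS φ => ∀ t, Relation.ReflTransGen R s t → sats R V t φ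

/-- Embedding of basic modal formulas into the language with [b*]. -/
def embed : MF → MFs
  | .var q => .var q
  | .bot => .bot
  | .imp a b => .imp (embed a) (embed b)
  | .box a => .box (embed a)

/-- Θ = p_{n+1} ∧ [b*](⟨b⟩p_{n+1} → p_{n+1}); the fresh variable p_{n+1}
is represented by `MFs.var n` (variables p_1, ..., p_n are var 0, ..., var (n-1)). -/
def Theta (n : ℕ) : MFs :=
  MFs.and (.var n) (.boxS (.imp (MFs.dia (.var n)) (.var n)))

/-- All variables of φ are among p_1, ..., p_n (i.e. var 0, ..., var (n-1)). -/
def varsLt (n : ℕ) (φ : MF) : Prop := ∀ q : ℕ, occurs q φ → q < n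

lemma satCongr {S : Type} (R : S → S → Prop) (V W : ℕ → S → Prop) :
    ∀ (φ : MF), (∀ q, occurs q φ → ∀ s, V q s ↔ W q s) →
    ∀ s, sat R V s φ ↔ sat R W s φ := by
  intro φ
  induction φ with
  | var q => intro h s; exact h q rfl s
  | bot => intro _ _; exact Iff.rfl
  | imp a b iha ihb =>
    intro h s
    exact imp_congr (iha (fun q hq => h q (Or.inl hq)) s)
      (ihb (fun q hq => h q (Or.inr hq)) s)
  | box a ih =>
    intro h s
    simp only [sat]
    exact forall₂_congr fun t _ => ih (fun q hq => h q hq) t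

lemma satRCongr {S : Type} (R R' : S → S → Prop) (hR : ∀ a b, R a b ↔ R' a b)
    (V : ℕ → S → Prop) : ∀ (φ : MF) (s : S), sat R V s φ ↔ sat R' V s φ := by
  intro φ
  induction φ with
  | var q => intro s; exact Iff.rfl
  | bot => intro _; exact Iff.rfl
  | imp a b iha ihb => intro s; exact imp_congr (iha s) (ihb s)
  | box a ih =>
    intro s
    simp only [sat]
    exact forall_congr' fun t => imp_congr (hR s t) (ih t)

lemma relT_sat {S : Type} (R : S → S → Prop) (V : ℕ → S → Prop) (p : ℕ) :
    ∀ (φ : MF) (s : S),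
      sats R V s (embed (relT p φ)) ↔ sat (fun a b => R a b ∧ V p b) V s φ := by
  intro φ
  induction φ with
  | var q => intro s; exact Iff.rfl
  | bot => intro s; exact Iff.rfl
  | imp a b iha ihb => intro s; exact imp_congr (iha s) (ihb s)
  | box a ih =>
    intro s
    simp only [relT, embed, sats, sat]
    constructor
    · rintro h t ⟨hRt, hp⟩; exact (ih t).1 (h t hRt hp)
    · intro h t hRt hp; exact (ih t).2 (h t ⟨hRt, hp⟩)

/-- φ is satisfiable iff Θ ∧ φ' is satisfiable, where φ' is the relativized
translation of φ with respect to the fresh variable p_{n+1}. -/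
theorem stmt10 (n : ℕ) (φ : MF) (hφ : varsLt n φ) :
    (∃ (S : Type) (R : S → S → Prop) (V : ℕ → S → Prop) (s : S), sat R V s φ) ↔
    (∃ (S : Type) (R : S → S → Prop) (V : ℕ → S → Prop) (s : S),
      sats R V s (MFs.and (Theta n) (embed (relT n φ)))) := by
  constructor
  · rintro ⟨S, R, V, s, hs⟩
    refine ⟨S, R, fun q => if q = n then fun _ => True else V q, s, ?_⟩
    set W : ℕ → S → Prop := fun q => if q = n then fun _ => True else V q with hW
    have hWn : ∀ t, W n t := by intro t; simp [hW]
    have hsat : sat R W s φ := by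
      refine (satCongr R V W φ ?_ s).1 hs
      intro q hq t
      have : q ≠ n := Nat.ne_of_lt (hφ q hq)
      simp [hW, this]
    intro h
    refine h ?_ ?_
    · -- Theta
      intro h2
      exact h2 (hWn s) (fun t _ _ => hWn t)
    · -- translation
      refine (relT_sat R W n φ s).2 ?_
      refine (satRCongr R (fun a b => R a b ∧ W n b) (fun a b => ?_) W φ s).1 hsat
      exact ⟨fun h => ⟨h, hWn b⟩, fun h => h.1⟩
  · rintro ⟨S, R, V, s, hs⟩
    have hφ' : sats R V s (embed (relT n φ)) := by
      by_contra hc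
      exact hs (fun _ hb => hc hb)
    exact ⟨S, fun a b => R a b ∧ V n b, V, s, (relT_sat R V n φ s).1 hφ'⟩
end

section
/- If the formula Θ ∧ φ' (with Θ = p_{n+1} ∧ [b*](⟨b⟩p_{n+1} → p_{n+1}) and φ' the relativized translation of φ) is satisfiable, then it is satisfiable in a model in which p_{n+1} is true at every state. -/
lemma genV {S : Type} {R : S → S → Prop} {V : ℕ → S → Prop} {n : ℕ} {s0 : S}
    (h0 : V n s0) : ∀ {x : S}, Gen R V n s0 x → V n x := by
  intro x hx
  induction hx with
  | base => exact h0
  | step _ _ hy _ => exact hy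

lemma relT_restrict {S : Type} (R : S → S → Prop) (V : ℕ → S → Prop) (n : ℕ) (s0 : S) :
    ∀ (ψ : MF) (x : S) (hx : Gen R V n s0 x),
      sats R V x (embed (relT n ψ)) ↔
      sats (fun a b : {y // Gen R V n s0 y} => R a.1 b.1)
           (fun q a => V q a.1) ⟨x, hx⟩ (embed (relT n ψ)) := by
  intro ψ
  induction ψ with
  | var q => intro x hx; simp [relT, embed, sats]
  | bot => intro x hx; simp [relT, embed, sats]
  | imp a b iha ihb =>
      intro x hx
      simp only [relT, embed, sats]
      rw [iha x hx, ihb x hx]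
  | box a ih =>
      intro x hx
      simp only [relT, embed, sats]
      constructor
      · rintro H ⟨t, ht⟩ hR hV
        exact (ih t ht).mp (H t hR hV)
      · intro H t hR hV
        exact (ih t (Gen.step hx hR hV)).mpr (H ⟨t, Gen.step hx hR hV⟩ hR hV)

/-- If Θ ∧ φ' is satisfiable, it is satisfiable in a model where the fresh
variable p_{n+1} is true at every state. -/
theorem stmt11 (n : ℕ) (φ : MF) (hφ : varsLt n φ)
    (h : ∃ (S : Type) (R : S → S → Prop) (V : ℕ → S → Prop) (s : S),
      sats R V s (MFs.and (Theta n) (embed (relT n φ)))) :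
    ∃ (S : Type) (R : S → S → Prop) (V : ℕ → S → Prop) (s : S),
      (∀ x : S, V n x) ∧ sats R V s (MFs.and (Theta n) (embed (relT n φ))) := by
  classical
  obtain ⟨S, R, V, s, hs⟩ := h
  have hVn : V n s := by
    simp only [MFs.and, MFs.neg, Theta, sats] at hs; tauto
  have hφ' : sats R V s (embed (relT n φ)) := by
    simp only [MFs.and, MFs.neg, Theta, sats] at hs; tauto
  refine ⟨{y // Gen R V n s y}, fun a b => R a.1 b.1, fun q a => V q a.1,
    ⟨s, Gen.base⟩, fun x => genV hVn x.2, ?_⟩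
  have hφ'' := (relT_restrict R V n s φ s Gen.base).mp hφ'
  have hall : ∀ x : {y // Gen R V n s y}, V n x.1 := fun x => genV hVn x.2
  simp only [MFs.and, MFs.neg, Theta, MFs.dia, sats]
  intro H
  exact H (fun H2 => H2 hVn (fun t _ _ => hall t)) hφ''
end
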